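/- arXiv:1402.0382 — 3 statements merged into one kernel-verified Lean document; each statement's English description precedes it below -/
import Mathlib

section
/- Let 𝓗 be a complex Hilbert space, H a bounded self-adjoint operator on 𝓗, and let P and R be bounded operators on 𝓗 such that R commutes with H (HR = RH). Then for every t ∈ ℝ, ‖[exp(−itH), P] R‖ ≤ |t| · ‖[H, P] R‖, where [A,B] := AB − BA denotes the commutator and exp(−itH) is the operator exponential of (−it)·H. -/
open NormedSpace

/-- If `H` is a bounded self-adjoint operator on a complex Hilbert space, `P`, `R` are bounded
operators and `R` commutes with `H`, then `‖[exp(−itH), P] R‖ ≤ |t| ⬝ ‖[H, P] R‖`. -/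
theorem norm_commutator_exp_le {𝓗 : Type*} [NormedAddCommGroup 𝓗] [InnerProductSpace ℂ 𝓗]
    [CompleteSpace 𝓗] (H P R : 𝓗 →L[ℂ] 𝓗) (hH : IsSelfAdjoint H) (hR : H * R = R * H)
    (t : ℝ) :
    ‖(exp ((-(Complex.I * t)) • H) * P - P * exp ((-(Complex.I * t)) • H)) * R‖ ≤
      |t| * ‖(H * P - P * H) * R‖ := by
  rcases subsingleton_or_nontrivial 𝓗 with h𝓗 | h𝓗
  · have : ((exp ((-(Complex.I * t)) • H) * P - P * exp ((-(Complex.I * t)) • H)) * R)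
        = 0 := Subsingleton.elim _ _
    rw [this, norm_zero]
    positivity
  haveI : Nontrivial (𝓗 →L[ℂ] 𝓗) := by
    obtain ⟨x, hx⟩ := exists_ne (0 : 𝓗)
    exact ⟨1, 0, fun h => hx (by simpa using DFunLike.congr_fun h x)⟩
  -- the skew-adjoint generator
  set A : 𝓗 →L[ℂ] 𝓗 := (-Complex.I) • H with hA
  have hAstar : star A = -A := by
    rw [hA, star_smul, hH.star_eq]
    simp [neg_smul]
  have hskew : ∀ s : ℝ, ((s : ℂ) • A) ∈ skewAdjoint (𝓗 →L[ℂ] 𝓗) := by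
    intro s
    rw [skewAdjoint.mem_iff, star_smul, hAstar]
    simp
  set U : ℝ → (𝓗 →L[ℂ] 𝓗) := fun s => exp ((s : ℂ) • A) with hU
  have hUunit : ∀ s : ℝ, U s ∈ unitary (𝓗 →L[ℂ] 𝓗) := fun s =>
    letI : NormedAlgebra ℚ (𝓗 →L[ℂ] 𝓗) := NormedAlgebra.restrictScalars ℚ ℂ _
    exp_mem_unitary_of_mem_skewAdjoint (hskew s)
  have hAR : Commute A R := by
    rw [hA]; exact (Commute.smul_left hR (-Complex.I))
  have hUA : ∀ s : ℝ, Commute (U s) A := fun s =>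
    ((Commute.refl A).smul_left (s : ℂ)).exp_left
  have hUR : ∀ s : ℝ, Commute (U s) R := fun s =>
    (hAR.smul_left (s : ℂ)).exp_left
  -- derivative of U
  have hU' : ∀ s : ℝ, HasDerivAt U (U s * A) s := by
    intro s
    have h := (hasDerivAt_exp_smul_const A (s : ℂ)).scomp s
      (Complex.ofRealCLM.hasDerivAt (x := s))
    simpa [Function.comp_def, hU] using h
  have hV' : ∀ s : ℝ, HasDerivAt (fun s : ℝ => U (t - s)) (-(U (t - s) * A)) s := by
    intro s
    have h1 : HasDerivAt (fun s : ℝ => t - s) (-1) s := by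
      simpa using (hasDerivAt_id s).const_sub t
    have := (hU' (t - s)).scomp s h1
    simpa [neg_one_smul, Function.comp_def] using this
  -- the interpolating function
  set F : ℝ → (𝓗 →L[ℂ] 𝓗) := fun s => U s * P * (U (t - s) * R) with hF
  set E : 𝓗 →L[ℂ] 𝓗 := (A * P - P * A) * R with hE
  have hF' : ∀ s : ℝ, HasDerivAt F (U s * (E * U (t - s))) s := by
    intro s
    have h1 : HasDerivAt (fun s : ℝ => U s * P) (U s * A * P) s := (hU' s).mul_const P
    have h2 : HasDerivAt (fun s : ℝ => U (t - s) * R) (-(U (t - s) * A) * R) s :=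
      (hV' s).mul_const R
    have h3 := h1.mul h2
    refine h3.congr_deriv (Eq.symm ?_)
    have c1 : U (t - s) * R = R * U (t - s) := (hUR (t - s)).eq
    have c2 : U (t - s) * (A * R) = (A * R) * U (t - s) :=
      ((hUA (t - s)).mul_right (hUR (t - s))).eq
    calc U s * (E * U (t - s))
        = U s * A * P * (R * U (t - s)) - U s * P * (U (t - s) * (A * R)) := by
          rw [c2, hE]; noncomm_ring
      _ = U s * A * P * (U (t - s) * R) + U s * P * (-(U (t - s) * A) * R) := by
          rw [c1]; noncomm_ring
  have hbound : ∀ s : ℝ, ‖U s * (E * U (t - s))‖ ≤ ‖(H * P - P * H) * R‖ := by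
    intro s
    have h1 : ‖U s * (E * U (t - s))‖ = ‖E * U (t - s)‖ :=
      CStarRing.norm_mem_unitary_mul _ (hUunit s)
    have h2 : ‖E * U (t - s)‖ = ‖E‖ := CStarRing.norm_mul_mem_unitary _ (hUunit (t - s))
    have h3 : E = (-Complex.I) • ((H * P - P * H) * R) := by
      rw [hE, hA]
      simp only [smul_mul_assoc, mul_smul_comm, ← smul_sub]
    rw [h1, h2, h3, norm_smul]
    simp
  -- mean value inequality on univ
  have key : ‖F t - F 0‖ ≤ ‖(H * P - P * H) * R‖ * ‖t - 0‖ := by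
    refine Convex.norm_image_sub_le_of_norm_hasDerivWithin_le
      (f := F) (f' := fun s => U s * (E * U (t - s)))
      (fun x _ => (hF' x).hasDerivWithinAt) (fun x _ => hbound x) convex_univ
      (Set.mem_univ 0) (Set.mem_univ t)
  have hU0 : U 0 = 1 := by simp [hU, exp_zero]
  have hUt : exp ((-(Complex.I * t)) • H) = U t := by
    rw [hU]
    congr 1
    rw [smul_smul]
    congr 1
    ring
  have hendpoints : F t - F 0 =
      (exp ((-(Complex.I * t)) • H) * P - P * exp ((-(Complex.I * t)) • H)) * R := by
    show U t * P * (U (t - t) * R) - U 0 * P * (U (t - 0) * R) = _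
    rw [sub_self, sub_zero, hU0, hUt]
    noncomm_ring
  calc ‖(exp ((-(Complex.I * t)) • H) * P - P * exp ((-(Complex.I * t)) • H)) * R‖
      = ‖F t - F 0‖ := by rw [hendpoints]
    _ ≤ ‖(H * P - P * H) * R‖ * ‖t - 0‖ := key
    _ = |t| * ‖(H * P - P * H) * R‖ := by
        rw [sub_zero, Real.norm_eq_abs, mul_comm]
end

section
/- Let 𝓗 be a complex Hilbert space, H a bounded self-adjoint operator on 𝓗, P an orthogonal projection on 𝓗 (P = P* and P² = P), U a unitary operator on 𝓗, and R a bounded operator commuting with H (HR = RH). Define the effective operator H_eff := U* (P H P) U. Then for every t ∈ ℝ, ‖(exp(−itH) − U exp(−itH_eff) U*) P R‖ ≤ 2 |t| · ‖[H, P] R‖. -/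
open NormedSpace

section Aux

variable {A : Type*} [NormedRing A] [NormedAlgebra ℂ A] [CompleteSpace A]

private lemma hasDerivAt_exp_aux (X : A) (c : ℂ) (s : ℝ) :
    HasDerivAt (fun s : ℝ => exp ((s • c) • X)) (c • (exp ((s • c) • X) * X)) s := by
  have h1 : HasDerivAt (fun z : ℂ => exp (z • X)) (exp (((s : ℝ) • c) • X) * X)
      ((s : ℝ) • c) := hasDerivAt_exp_smul_const X _
  have h2 : HasDerivAt (fun s : ℝ => (s • c : ℂ)) c s := by
    simpa using (hasDerivAt_id s).smul_const c
  simpa [Function.comp_def] using h1.scomp s h2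

private lemma exp_neg_mul_exp_aux (a : A) : exp (-a) * exp a = 1 := by
  letI : NormedAlgebra ℚ A := NormedAlgebra.restrictScalars ℚ ℂ A
  rw [← exp_add_of_commute ((Commute.refl a).neg_left), neg_add_cancel, exp_zero]

private lemma exp_inv_aux (X : A) (s : ℝ) :
    exp ((s • (-Complex.I)) • X) * exp ((s • Complex.I) • X) = 1 := by
  rw [show ((s : ℝ) • (-Complex.I)) • X = -(((s : ℝ) • Complex.I) • X) by
    rw [smul_neg, neg_smul]]
  exact exp_neg_mul_exp_aux _

private lemma mvt_aux {f f' : ℝ → A} {C : ℝ}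
    (hf : ∀ s, HasDerivAt f (f' s) s) (hC : ∀ s, ‖f' s‖ ≤ C) (t : ℝ) :
    ‖f t - f 0‖ ≤ C * |t| := by
  have := Convex.norm_image_sub_le_of_norm_hasDerivWithin_le
    (f := f) (f' := f') (s := (Set.univ : Set ℝ))
    (fun x _ => (hf x).hasDerivWithinAt) (fun x _ => hC x) convex_univ
    (Set.mem_univ 0) (Set.mem_univ t)
  simpa [Real.norm_eq_abs] using this

end Aux

set_option maxHeartbeats 1000000 in
/-- Abstract core of Corollary 2.3: the dynamics generated by `H` on the range of a projection
`P` is approximated by the effective dynamics `H_eff = U* (P H P) U`, with error controlled by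
the commutator `[H, P]` composed with a cutoff `R` commuting with `H`, linearly in `|t|`. -/
theorem norm_exp_sub_effective_exp_le {𝓗 : Type*} [NormedAddCommGroup 𝓗]
    [InnerProductSpace ℂ 𝓗] [CompleteSpace 𝓗] (H P U R : 𝓗 →L[ℂ] 𝓗)
    (hH : IsSelfAdjoint H) (hP_sa : IsSelfAdjoint P) (hP_idem : P * P = P)
    (hU : U * star U = 1) (hU' : star U * U = 1) (hR : H * R = R * H) (t : ℝ) :
    ‖(exp ((-(Complex.I * t)) • H) -
        U * exp ((-(Complex.I * t)) • (star U * (P * H * P) * U)) * star U) * (P * R)‖ ≤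
      2 * |t| * ‖(H * P - P * H) * R‖ := by
  -- rewrite the scalar
  have hscal : (-(Complex.I * (t : ℂ))) = ((t : ℝ) • (-Complex.I) : ℂ) := by
    rw [Complex.real_smul]; ring
  rw [hscal]
  -- the conjugated exponential equals the exponential of B = P * H * P
  have hUconj : U * exp (((t : ℝ) • (-Complex.I)) • (star U * (P * H * P) * U)) * star U
      = exp (((t : ℝ) • (-Complex.I)) • (P * H * P)) := by
    have hx : ((((t : ℝ) • (-Complex.I)) • (star U * (P * H * P) * U)) : 𝓗 →L[ℂ] 𝓗)
        = star U * ((((t : ℝ) • (-Complex.I)) • (P * H * P))) * U := by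
      rw [mul_smul_comm, smul_mul_assoc]
    have h3 : exp (star U * ((((t : ℝ) • (-Complex.I)) • (P * H * P))) * U)
        = star U * exp ((((t : ℝ) • (-Complex.I)) • (P * H * P))) * U :=
      letI : NormedAlgebra ℚ (𝓗 →L[ℂ] 𝓗) := NormedAlgebra.restrictScalars ℚ ℂ _
      exp_units_conj' (⟨U, star U, hU, hU'⟩ : (𝓗 →L[ℂ] 𝓗)ˣ) _
    rw [hx, h3, ← mul_assoc, ← mul_assoc, hU, one_mul, mul_assoc, hU, mul_one]
  rw [hUconj]
  -- commutation facts
  have hBsa : IsSelfAdjoint (P * H * P) := by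
    have := hH.conjugate P
    rwa [hP_sa.star_eq] at this
  have hBP : Commute P (P * H * P) := by
    show P * (P * H * P) = P * H * P * P
    rw [← mul_assoc, ← mul_assoc, hP_idem, mul_assoc (P * H) P P, hP_idem]
  have hPB : P * (P * H * P) = P * H * P := by
    rw [← mul_assoc, ← mul_assoc, hP_idem]
  have hHR : Commute H R := hR
  -- norms of unitary exponentials
  have hone : ‖(1 : 𝓗 →L[ℂ] 𝓗)‖ ≤ 1 := by
    rw [ContinuousLinearMap.one_def]; exact ContinuousLinearMap.norm_id_le
  have hexp_norm : ∀ (X : 𝓗 →L[ℂ] 𝓗), IsSelfAdjoint X → ∀ (s : ℝ) (c : ℂ), star c = -c →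
      ‖exp ((s • c) • X)‖ ≤ 1 := by
    intro X hX s c hc
    have hskew : ((s • c) • X) ∈ skewAdjoint (𝓗 →L[ℂ] 𝓗) := by
      rw [skewAdjoint.mem_iff, star_smul, hX.star_eq, star_smul, star_trivial, hc, smul_neg,
        neg_smul]
    letI : NormedAlgebra ℚ (𝓗 →L[ℂ] 𝓗) := NormedAlgebra.restrictScalars ℚ ℂ _
    have huni := exp_mem_unitary_of_mem_skewAdjoint hskew
    have h2 : star (exp ((s • c) • X)) * exp ((s • c) • X) = 1 :=
      (Unitary.mem_iff.mp huni).1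
    have h3 : ‖exp ((s • c) • X)‖ * ‖exp ((s • c) • X)‖ = ‖(1 : 𝓗 →L[ℂ] 𝓗)‖ := by
      rw [← h2, CStarRing.norm_star_mul_self]
    nlinarith [norm_nonneg (exp ((s • c) • X))]
  have hcI : star (Complex.I) = -Complex.I := by simp [Complex.star_def]
  have hcI' : star (-Complex.I) = -(-Complex.I) := by simp [Complex.star_def]
  have hPn : ‖P‖ ≤ 1 := by
    have h3 : ‖P‖ * ‖P‖ = ‖P‖ := by
      conv_lhs => rw [← CStarRing.norm_star_mul_self, hP_sa.star_eq, hP_idem]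
    nlinarith [norm_nonneg P]
  have hbound : ∀ (u v X : 𝓗 →L[ℂ] 𝓗), ‖u‖ ≤ 1 → ‖v‖ ≤ 1 → ‖u * X * v‖ ≤ ‖X‖ := by
    intro u v X hu hv
    have a1 := norm_mul_le (u * X) v
    have a2 := norm_mul_le u X
    nlinarith [norm_nonneg X, norm_nonneg v, norm_nonneg u, norm_nonneg (u * X)]
  -- commutes with exponentials
  have hPeB : ∀ (s : ℝ) (c : ℂ), P * exp ((s • c) • (P * H * P))
      = exp ((s • c) • (P * H * P)) * P :=
    fun s c => ((hBP.smul_right _).exp_right).eq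
  have hHeH : ∀ (s : ℝ) (c : ℂ), exp ((s • c) • H) * H = H * exp ((s • c) • H) :=
    fun s c => (((Commute.refl H).smul_right _).exp_right).symm.eq
  have hReH : ∀ (s : ℝ) (c : ℂ), exp ((s • c) • H) * R = R * exp ((s • c) • H) :=
    fun s c => ((hHR.smul_left _).exp_left).eq
  -- first Duhamel-type bound: the commutator flow
  set K : 𝓗 →L[ℂ] 𝓗 := (H * P - P * H) * R with hK
  have hf : ∀ s : ℝ, HasDerivAt
      (fun s : ℝ => exp ((s • Complex.I) • H) * (P * R) * exp ((s • (-Complex.I)) • H))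
      (Complex.I • (exp ((s • Complex.I) • H) * K * exp ((s • (-Complex.I)) • H))) s := by
    intro s
    have h3 := ((hasDerivAt_exp_aux H Complex.I s).mul_const (P * R)).mul
      (hasDerivAt_exp_aux H (-Complex.I) s)
    refine h3.congr_deriv (Eq.symm ?_)
    set a := exp ((s • Complex.I) • H)
    set b := exp ((s • (-Complex.I)) • H)
    rw [hHeH s (-Complex.I)]
    simp only [smul_mul_assoc, mul_smul_comm, neg_smul, mul_neg]
    rw [← sub_eq_add_neg, ← smul_sub]
    congr 1
    calc a * K * b = a * H * (P * R) * b - (a * P) * (H * R) * b := by rw [hK]; noncomm_ring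
      _ = a * H * (P * R) * b - (a * P) * (R * H) * b := by rw [hR]
      _ = a * H * (P * R) * b - a * (P * R) * (H * b) := by noncomm_ring
  have hfb : ∀ s : ℝ, ‖Complex.I • (exp ((s • Complex.I) • H) * K *
      exp ((s • (-Complex.I)) • H))‖ ≤ ‖K‖ := by
    intro s
    rw [norm_smul, Complex.norm_I, one_mul]
    exact hbound _ _ _ (hexp_norm H hH s Complex.I hcI) (hexp_norm H hH s (-Complex.I) hcI')
  have hfm := mvt_aux hf hfb t
  have hf0 : exp (((0 : ℝ) • Complex.I) • H) * (P * R) *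
      exp (((0 : ℝ) • (-Complex.I)) • H) = P * R := by
    simp [exp_zero]
  -- second Duhamel-type bound
  have hm : ∀ s : ℝ, HasDerivAt
      (fun s : ℝ => (P * exp ((s • Complex.I) • (P * H * P))) *
        (exp ((s • (-Complex.I)) • H) * R))
      (Complex.I • (exp ((s • Complex.I) • (P * H * P)) * (P * K) *
        exp ((s • (-Complex.I)) • H))) s := by
    intro s
    have h3 := ((hasDerivAt_exp_aux (P * H * P) Complex.I s).const_mul P).mul
      ((hasDerivAt_exp_aux H (-Complex.I) s).mul_const R)
    refine h3.congr_deriv (Eq.symm ?_)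
    set a := exp ((s • Complex.I) • (P * H * P)) with ha
    set b := exp ((s • (-Complex.I)) • H) with hb
    rw [hHeH s (-Complex.I)]
    simp only [smul_mul_assoc, mul_smul_comm, neg_smul, mul_neg, neg_mul]
    rw [← sub_eq_add_neg, ← smul_sub]
    congr 1
    have hPa : P * a = a * P := hPeB s Complex.I
    have hbR : b * R = R * b := hReH s (-Complex.I)
    have hPK : P * K = (P * (P * H * P)) * R - (P * H) * R := by
      rw [hK]
      calc P * ((H * P - P * H) * R) = ((P * H) * P) * R - ((P * P) * H) * R := by noncomm_ring
        _ = ((P * H) * P) * R - (P * H) * R := by rw [hP_idem]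
        _ = (P * (P * H * P)) * R - (P * H) * R := by rw [hPB]
    calc a * (P * K) * b = a * ((P * (P * H * P)) * R - (P * H) * R) * b := by rw [hPK]
      _ = (a * P) * ((P * H * P) * (R * b)) - (a * P) * (H * (R * b)) := by noncomm_ring
      _ = (P * a) * ((P * H * P) * (b * R)) - (P * a) * (H * (b * R)) := by rw [hPa, hbR]
      _ = P * (a * ((P * H * P) * (b * R))) - (P * a) * ((H * b) * R) := by noncomm_ring
  have hmb : ∀ s : ℝ, ‖Complex.I • (exp ((s • Complex.I) • (P * H * P)) * (P * K) *
      exp ((s • (-Complex.I)) • H))‖ ≤ ‖K‖ := by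
    intro s
    rw [norm_smul, Complex.norm_I, one_mul]
    have h1 := hbound _ _ (P * K) (hexp_norm _ hBsa s Complex.I hcI)
      (hexp_norm H hH s (-Complex.I) hcI')
    have h2 := norm_mul_le P K
    nlinarith [norm_nonneg K, norm_nonneg P]
  have hmm := mvt_aux hm hmb t
  have hm0 : (P * exp (((0 : ℝ) • Complex.I) • (P * H * P))) *
      (exp (((0 : ℝ) • (-Complex.I)) • H) * R) = P * R := by
    simp [exp_zero]
  -- put things together
  set eHt := exp (((t : ℝ) • (-Complex.I)) • H) with heHt
  set eHt' := exp (((t : ℝ) • Complex.I) • H) with heHt'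
  set eBt := exp (((t : ℝ) • (-Complex.I)) • (P * H * P)) with heBt
  set eBt' := exp (((t : ℝ) • Complex.I) • (P * H * P)) with heBt'
  have hinvH : eHt * eHt' = 1 := exp_inv_aux H t
  have hinvB : eBt * eBt' = 1 := exp_inv_aux (P * H * P) t
  -- T1
  have hT1 : ‖eHt * (P * R) - (P * R) * eHt‖ ≤ ‖K‖ * |t| := by
    have h1eq : eHt * (eHt' * (P * R) * eHt) = (P * R) * eHt := by
      calc eHt * (eHt' * (P * R) * eHt) = (eHt * eHt') * ((P * R) * eHt) := by noncomm_ring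
        _ = (P * R) * eHt := by rw [hinvH, one_mul]
    have heq : eHt * (P * R) - (P * R) * eHt
        = eHt * ((exp (((0 : ℝ) • Complex.I) • H) * (P * R) *
            exp (((0 : ℝ) • (-Complex.I)) • H)) - (eHt' * (P * R) * eHt)) := by
      rw [hf0, mul_sub, h1eq]
    rw [heq]
    have h2 := norm_mul_le eHt ((exp (((0 : ℝ) • Complex.I) • H) * (P * R) *
      exp (((0 : ℝ) • (-Complex.I)) • H)) - (eHt' * (P * R) * eHt))
    rw [norm_sub_rev] at h2
    have h4 : ‖eHt‖ ≤ 1 := hexp_norm H hH t (-Complex.I) hcI'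
    nlinarith [hfm, norm_nonneg (eHt' * (P * R) * eHt - (exp (((0 : ℝ) • Complex.I) • H) *
      (P * R) * exp (((0 : ℝ) • (-Complex.I)) • H)))]
  -- T2
  have hT2 : ‖(P * R) * eHt - eBt * (P * R)‖ ≤ ‖K‖ * |t| := by
    have h1eq : eBt * ((P * eBt') * (eHt * R)) = (P * R) * eHt := by
      calc eBt * ((P * eBt') * (eHt * R)) = (eBt * P) * (eBt' * (eHt * R)) := by noncomm_ring
        _ = (P * eBt) * (eBt' * (eHt * R)) := by rw [← hPeB t (-Complex.I)]
        _ = P * ((eBt * eBt') * (eHt * R)) := by noncomm_ring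
        _ = P * (eHt * R) := by rw [hinvB, one_mul]
        _ = P * (R * eHt) := by rw [hReH t (-Complex.I)]
        _ = (P * R) * eHt := by rw [mul_assoc]
    have heq : eBt * (P * R) - (P * R) * eHt
        = eBt * (((P * exp (((0 : ℝ) • Complex.I) • (P * H * P))) *
            (exp (((0 : ℝ) • (-Complex.I)) • H) * R)) - ((P * eBt') * (eHt * R))) := by
      rw [hm0, mul_sub, h1eq]
    rw [norm_sub_rev, heq]
    have h2 := norm_mul_le eBt (((P * exp (((0 : ℝ) • Complex.I) • (P * H * P))) *
      (exp (((0 : ℝ) • (-Complex.I)) • H) * R)) - ((P * eBt') * (eHt * R)))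
    rw [norm_sub_rev] at h2
    have h4 : ‖eBt‖ ≤ 1 := hexp_norm _ hBsa t (-Complex.I) hcI'
    nlinarith [hmm, norm_nonneg ((P * eBt') * (eHt * R) -
      (P * exp (((0 : ℝ) • Complex.I) • (P * H * P))) *
      (exp (((0 : ℝ) • (-Complex.I)) • H) * R))]
  -- conclude
  have hsplit : (eHt - eBt) * (P * R)
      = (eHt * (P * R) - (P * R) * eHt) + ((P * R) * eHt - eBt * (P * R)) := by noncomm_ring
  rw [hsplit]
  calc ‖(eHt * (P * R) - (P * R) * eHt) + ((P * R) * eHt - eBt * (P * R))‖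
      ≤ ‖eHt * (P * R) - (P * R) * eHt‖ + ‖(P * R) * eHt - eBt * (P * R)‖ := norm_add_le _ _
    _ ≤ 2 * |t| * ‖K‖ := by linarith
end

section
/- Let 𝓗 be a complex Hilbert space, H a bounded self-adjoint operator on 𝓗, and P an orthogonal projection on 𝓗. Suppose μ ∈ ℝ and ψ ∈ 𝓗 satisfy ‖ψ‖ = 1, Pψ = ψ, and ‖PHPψ − μψ‖ ≤ δ. Then dist(μ, σ(H)) ≤ δ + ‖[H, P] P‖, where σ(H) denotes the real spectrum of H and [A,B] := AB − BA. -/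
open scoped InnerProductSpace ComplexConjugate Pointwise

/-- Abstract mechanism of Corollary 2.4: a normalised approximate eigenvector of the compressed
operator `PHP` lying in the range of the orthogonal projection `P` is a quasimode for `H`
itself up to the commutator error, hence
`dist(μ, σ(H)) ≤ δ + ‖[H, P] P‖`. -/
theorem dist_spectrum_le_of_compressed_quasimode {𝓗 : Type*} [NormedAddCommGroup 𝓗]
    [InnerProductSpace ℂ 𝓗] [CompleteSpace 𝓗] (H P : 𝓗 →L[ℂ] 𝓗)
    (hH : IsSelfAdjoint H) (hP_sa : IsSelfAdjoint P) (hP_idem : P * P = P)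
    (μ : ℝ) (δ : ℝ) (ψ : 𝓗) (hψ : ‖ψ‖ = 1) (hPψ : P ψ = ψ)
    (hquasi : ‖(P * H * P) ψ - (μ : ℂ) • ψ‖ ≤ δ) :
    Metric.infDist μ {lam : ℝ | (lam : ℂ) ∈ spectrum ℂ H} ≤
      δ + ‖(H * P - P * H) * P‖ := by
  set T : 𝓗 →L[ℂ] 𝓗 := H - algebraMap ℂ _ (μ : ℂ) with hTdef
  have hT : IsSelfAdjoint T := by
    refine hH.sub ?_
    rw [IsSelfAdjoint, ← algebraMap_star_comm, Complex.star_def, Complex.conj_ofReal]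
  set d : ℝ := Metric.infDist μ {lam : ℝ | (lam : ℂ) ∈ spectrum ℂ H} with hd
  have hd0 : 0 ≤ d := Metric.infDist_nonneg
  -- key spectral fact: every real spectral point of T has |x| ≥ d
  have hspec : ∀ x ∈ spectrum ℝ T, d ≤ |x| := by
    intro x hx
    have hxC : (x : ℂ) ∈ spectrum ℂ T := by
      have := spectrum.algebraMap_mem_iff ℂ (a := T) (r := x)
      exact this.mpr hx
    have hmem : (x + μ : ℝ) ∈ {lam : ℝ | (lam : ℂ) ∈ spectrum ℂ H} := by
      have : (x : ℂ) ∈ spectrum ℂ H - {(μ : ℂ)} := by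
        rw [spectrum.sub_singleton_eq]; exact hxC
      obtain ⟨a, ha, b, hb, hab⟩ := this
      simp only [Set.mem_singleton_iff] at hb
      subst hb
      simp only at hab
      have : a = ((x + μ : ℝ) : ℂ) := by push_cast; linear_combination hab
      simpa [← this] using ha
    have hle := Metric.infDist_le_dist_of_mem (x := μ) hmem
    have hdist : dist μ (x + μ) = |x| := by
      have hμ : μ - (x + μ) = -x := by ring
      rw [Real.dist_eq, hμ, abs_neg]
    rw [hdist] at hle
    exact hle
  -- positivity: T² - d² ≥ 0
  have hpos : (0 : 𝓗 →L[ℂ] 𝓗) ≤ T ^ 2 - algebraMap ℝ _ (d ^ 2) := by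
    have h1 : cfc (fun x : ℝ => x ^ 2 - d ^ 2) T
        = T ^ 2 - algebraMap ℝ _ (d ^ 2) := by
      rw [cfc_sub _ _ T, cfc_pow_id T 2, cfc_const (d ^ 2) T]
    rw [← h1]
    refine cfc_nonneg fun x hx => ?_
    have := hspec x hx
    have h2 : d ^ 2 ≤ |x| ^ 2 := pow_le_pow_left₀ hd0 this 2
    nlinarith [sq_abs x]
  -- hence d ≤ ‖T ψ‖
  have hdle : d ≤ ‖T ψ‖ := by
    have hip := (ContinuousLinearMap.nonneg_iff_isPositive _).mp hpos
    have h3 := hip.inner_nonneg_left ψ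
    have happ : (T ^ 2 - algebraMap ℝ (𝓗 →L[ℂ] 𝓗) (d ^ 2)) ψ
        = T (T ψ) - (d ^ 2 : ℝ) • ψ := by
      simp [pow_two, Algebra.algebraMap_eq_smul_one, ContinuousLinearMap.sub_apply,
        ContinuousLinearMap.mul_apply, ContinuousLinearMap.smul_apply]
    have h4 : (0:ℝ) ≤ RCLike.re (⟪T (T ψ) - (d ^ 2 : ℝ) • ψ, ψ⟫_ℂ) := by
      rw [← happ]; exact (RCLike.nonneg_iff.mp h3).1
    rw [inner_sub_left] at h4
    have h5 : ⟪T (T ψ), ψ⟫_ℂ = ((‖T ψ‖ ^ 2 : ℝ) : ℂ) := by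
      have hsym := hT.isSymmetric (T ψ) ψ
      simp only [ContinuousLinearMap.coe_coe] at hsym
      rw [hsym, inner_self_eq_norm_sq_to_K]
      norm_cast
    have h6 : ⟪(d ^ 2 : ℝ) • ψ, ψ⟫_ℂ = ((d ^ 2 : ℝ) : ℂ) := by
      rw [show ((d ^ 2 : ℝ) • ψ) = (((d ^ 2 : ℝ) : ℂ)) • ψ by
            rw [Complex.coe_smul], inner_smul_left, inner_self_eq_norm_sq_to_K]
      simp [hψ, Complex.conj_ofReal]
    rw [h5, h6] at h4
    simp only [map_sub, RCLike.ofReal_re] at h4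
    simp at h4
    rw [← Complex.ofReal_pow, ← Complex.ofReal_pow, Complex.ofReal_re,
      Complex.ofReal_re] at h4
    nlinarith [norm_nonneg (T ψ)]
  -- quasimode estimate: ‖T ψ‖ ≤ δ + ‖[H,P]P‖
  have hTψ : T ψ = ((H * P - P * H) * P) ψ + ((P * H * P) ψ - (μ : ℂ) • ψ) := by
    have h1 : P (P ψ) = ψ := by rw [hPψ, hPψ]
    simp only [hTdef, ContinuousLinearMap.sub_apply, ContinuousLinearMap.mul_apply, hPψ, h1,
      Algebra.algebraMap_eq_smul_one, ContinuousLinearMap.smul_apply,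
      ContinuousLinearMap.one_apply]
    abel
  have hfinal : ‖T ψ‖ ≤ δ + ‖(H * P - P * H) * P‖ := by
    rw [hTψ]
    refine (norm_add_le _ _).trans ?_
    rw [add_comm δ]
    refine add_le_add ?_ hquasi
    calc ‖((H * P - P * H) * P) ψ‖ ≤ ‖(H * P - P * H) * P‖ * ‖ψ‖ :=
          ContinuousLinearMap.le_opNorm _ _
      _ = ‖(H * P - P * H) * P‖ := by rw [hψ, mul_one]
  exact hdle.trans hfinal
end
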